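/- For every prime ℓ and all d₁, d₂ ≥ 1, one has δ₂(ℓ,(d₁,d₂)) ≥ (1 − 1/ℓ^{1+d₁})·(1 − 1/ℓ^{1+d₂}) − 2^ℓ/ℓ^ℓ. -/

import Mathlib

open Polynomial

set_option linter.unusedSectionVars false

section Aux

variable {F : Type*} [Field F]

lemma natDeg_le_iff_mem_degreeLT (d : ℕ) (P : F[X]) :
    P.natDegree ≤ d ↔ P ∈ degreeLT F (d+1) := by
  rw [mem_degreeLT]
  rcases eq_or_ne P 0 with h0 | h0
  · simp [h0]
  · rw [← natDegree_lt_iff_degree_lt h0]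
    omega

noncomputable def polyEquiv (F : Type*) [Field F] (d : ℕ) :
    {P : F[X] // P.natDegree ≤ d} ≃ (Fin (d+1) → F) :=
  (Equiv.subtypeEquivRight (q := fun P => P ∈ degreeLT F (d+1))
    (natDeg_le_iff_mem_degreeLT d)).trans (degreeLTEquiv F (d+1)).toEquiv

variable [Fintype F]

lemma finite_polySet (d : ℕ) : {P : F[X] | P.natDegree ≤ d}.Finite :=
  Set.finite_coe_iff.mp (Finite.of_equiv _ (polyEquiv F d).symm)

lemma card_polySet (d : ℕ) : {P : F[X] | P.natDegree ≤ d}.ncard = Fintype.card F ^ (d+1) := by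
  rw [← Nat.card_coe_set_eq]
  have : Nat.card {P : F[X] // P.natDegree ≤ d} = Fintype.card F ^ (d+1) := by
    rw [Nat.card_congr (polyEquiv F d)]
    simp [Nat.card_eq_fintype_card]
  exact this

variable [DecidableEq F]

lemma prod_X_sub_C_dvd_of_eval_eq_zero {S : Finset F} {P : F[X]}
    (h : ∀ x ∈ S, P.eval x = 0) : (∏ a ∈ S, (X - C a)) ∣ P := by
  rcases eq_or_ne P 0 with h0 | h0
  · simp [h0]
  have hle : S.val.map (fun a => (X : F[X]) - C a) ≤ P.roots.map (fun a => X - C a) := by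
    apply Multiset.map_le_map
    rw [Multiset.le_iff_count]
    intro a
    rcases Decidable.em (a ∈ S) with ha | ha
    · rw [count_roots]
      rw [Multiset.count_eq_one_of_mem S.nodup ha]
      exact (rootMultiplicity_pos h0).mpr (h a ha)
    · simp [Multiset.count_eq_zero_of_notMem, ha]
  calc (∏ a ∈ S, (X - C a) : F[X]) = (S.val.map (fun a => (X :F[X]) - C a)).prod := rfl
    _ ∣ (P.roots.map (fun a => X - C a)).prod := Multiset.prod_dvd_prod_of_le hle
    _ ∣ P := prod_multiset_X_sub_C_dvd P

noncomputable def vS (S : Finset F) : F[X] := ∏ a ∈ S, (X - C a)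

lemma monic_vS (S : Finset F) : (vS S).Monic :=
  monic_prod_of_monic _ _ fun a _ => monic_X_sub_C a

lemma natDegree_vS (S : Finset F) : (vS S).natDegree = S.card := by
  rw [vS, natDegree_prod]
  · simp
  · intro a _; exact X_sub_C_ne_zero a

open Classical in
noncomputable def polyFinset (F : Type*) [Field F] [Fintype F] (d : ℕ) : Finset F[X] :=
  (finite_polySet (F := F) d).toFinset

lemma mem_polyFinset {d : ℕ} {P : F[X]} : P ∈ polyFinset F d ↔ P.natDegree ≤ d :=
  Set.Finite.mem_toFinset _

lemma card_polyFinset (d : ℕ) : (polyFinset F d).card = Fintype.card F ^ (d+1) := by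
  rw [polyFinset, ← Set.ncard_eq_toFinset_card _ (finite_polySet d)]
  exact card_polySet d

open Classical in
noncomputable def DD (F : Type*) [Field F] [Fintype F] (d₁ d₂ : ℕ) : Finset (F[X] × F[X]) :=
  polyFinset F d₁ ×ˢ polyFinset F d₂

open Classical in
noncomputable def GG (F : Type*) [Field F] [Fintype F] (d₁ d₂ : ℕ) : Finset (F[X] × F[X]) :=
  (DD F d₁ d₂).filter (fun p => ∃ x, (p.1 * p.2).eval x ≠ 0)

open Classical in
noncomputable def BB (F : Type*) [Field F] [Fintype F] (d₁ d₂ : ℕ) : Finset (F[X] × F[X]) :=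
  (DD F d₁ d₂).filter (fun p => p.1 ≠ 0 ∧ p.2 ≠ 0 ∧ ∀ x, (p.1 * p.2).eval x = 0)

open Classical in
lemma NZ_card_le (d₁ d₂ : ℕ) :
    (Fintype.card F ^ (d₁+1) - 1) * (Fintype.card F ^ (d₂+1) - 1)
      ≤ (GG F d₁ d₂).card + (BB F d₁ d₂).card := by
  classical
  set NZ : Finset (F[X] × F[X]) :=
    (DD F d₁ d₂).filter (fun p => p.1 ≠ 0 ∧ p.2 ≠ 0) with hNZ
  have hsub : NZ ⊆ GG F d₁ d₂ ∪ BB F d₁ d₂ := by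
    intro p hp
    rw [hNZ, Finset.mem_filter] at hp
    obtain ⟨hpD, h1, h2⟩ := hp
    rcases Classical.em (∃ x, (p.1 * p.2).eval x ≠ 0) with h | h
    · apply Finset.mem_union_left
      simp only [GG, Finset.mem_filter]
      exact ⟨hpD, h⟩
    · push_neg at h
      apply Finset.mem_union_right
      simp only [BB, Finset.mem_filter]
      exact ⟨hpD, h1, h2, h⟩
  have hcard : NZ.card = (Fintype.card F ^ (d₁+1) - 1) * (Fintype.card F ^ (d₂+1) - 1) := by
    have : NZ = (polyFinset F d₁).erase 0 ×ˢ (polyFinset F d₂).erase 0 := by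
      ext p
      simp only [hNZ, Finset.mem_filter, DD, Finset.mem_product, Finset.mem_erase]
      tauto
    rw [this, Finset.card_product, Finset.card_erase_of_mem, Finset.card_erase_of_mem,
      card_polyFinset, card_polyFinset]
    · exact mem_polyFinset.mpr (by simp)
    · exact mem_polyFinset.mpr (by simp)
  calc (Fintype.card F ^ (d₁+1) - 1) * (Fintype.card F ^ (d₂+1) - 1) = NZ.card := hcard.symm
    _ ≤ (GG F d₁ d₂ ∪ BB F d₁ d₂).card := Finset.card_le_card hsub
    _ ≤ _ := Finset.card_union_le _ _

open Classical in
lemma fiber_facts {d₁ d₂ : ℕ} {S : Finset F} {p : F[X] × F[X]} (hp : p ∈ BB F d₁ d₂)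
    (hZ : Finset.univ.filter (fun x => p.1.eval x = 0) = S) :
    vS S ∣ p.1 ∧ vS Sᶜ ∣ p.2 ∧ S.card ≤ d₁ ∧ Sᶜ.card ≤ d₂ := by
  simp only [BB, DD, Finset.mem_filter, Finset.mem_product, mem_polyFinset] at hp
  obtain ⟨⟨hd1, hd2⟩, h1, h2, hv⟩ := hp
  have dvd1 : vS S ∣ p.1 := by
    apply prod_X_sub_C_dvd_of_eval_eq_zero
    intro x hx
    rw [← hZ, Finset.mem_filter] at hx
    exact hx.2
  have dvd2 : vS Sᶜ ∣ p.2 := by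
    apply prod_X_sub_C_dvd_of_eval_eq_zero
    intro x hx
    rw [Finset.mem_compl, ← hZ, Finset.mem_filter] at hx
    have hx1 : p.1.eval x ≠ 0 := by
      intro h; exact hx ⟨Finset.mem_univ x, h⟩
    have := hv x
    rw [eval_mul] at this
    rcases mul_eq_zero.mp this with h | h
    · exact absurd h hx1
    · exact h
  refine ⟨dvd1, dvd2, ?_, ?_⟩
  · exact (natDegree_vS S ▸ natDegree_le_of_dvd dvd1 h1).trans hd1
  · exact (natDegree_vS Sᶜ ▸ natDegree_le_of_dvd dvd2 h2).trans hd2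

open Classical in
lemma fiber_card_le (d₁ d₂ : ℕ) (S : Finset F) :
    ((BB F d₁ d₂).filter (fun p => Finset.univ.filter (fun x => p.1.eval x = 0) = S)).card
      ≤ Fintype.card F ^ (d₁ + d₂ + 2 - Fintype.card F) := by
  set q := Fintype.card F with hq
  set Fib := (BB F d₁ d₂).filter
    (fun p => Finset.univ.filter (fun x => p.1.eval x = 0) = S) with hFib
  rcases Finset.eq_empty_or_nonempty Fib with he | ⟨p₀, hp₀⟩
  · simp [he]
  have hp₀' := Finset.mem_filter.mp hp₀
  obtain ⟨_, _, hc1, hc2⟩ := fiber_facts hp₀'.1 hp₀'.2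
  have hcompl : Sᶜ.card = q - S.card := Finset.card_compl S
  have hSle : S.card ≤ q := le_trans (Finset.card_le_card (Finset.subset_univ S)) (by simp [hq])
  have hinj : Fib.card ≤ (polyFinset F (d₁ - S.card) ×ˢ polyFinset F (d₂ - Sᶜ.card)).card := by
    apply Finset.card_le_card_of_injOn (fun p => (p.1 /ₘ vS S, p.2 /ₘ vS Sᶜ))
    · intro p hp
      have hp' := Finset.mem_filter.mp hp
      obtain ⟨dvd1, dvd2, _, _⟩ := fiber_facts hp'.1 hp'.2
      have hpB := hp'.1
      simp only [BB, DD, Finset.mem_filter, Finset.mem_product, mem_polyFinset] at hpB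
      obtain ⟨⟨hd1, hd2⟩, h1, h2, hv⟩ := hpB
      simp only [Finset.mem_coe, Finset.mem_product, mem_polyFinset]
      constructor
      · rw [natDegree_divByMonic _ (monic_vS S), natDegree_vS]
        exact Nat.sub_le_sub_right hd1 _
      · rw [natDegree_divByMonic _ (monic_vS Sᶜ), natDegree_vS]
        exact Nat.sub_le_sub_right hd2 _
    · intro p hp p' hp' heq
      have hrec : ∀ r ∈ Fib, (vS S * (r.1 /ₘ vS S), vS Sᶜ * (r.2 /ₘ vS Sᶜ)) = r := by
        intro r hr
        have hr' := Finset.mem_filter.mp hr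
        obtain ⟨dvd1, dvd2, _, _⟩ := fiber_facts hr'.1 hr'.2
        have e1 := modByMonic_add_div r.1 (vS S)
        have e2 := modByMonic_add_div r.2 (vS Sᶜ)
        rw [(modByMonic_eq_zero_iff_dvd (monic_vS S)).mpr dvd1, zero_add] at e1
        rw [(modByMonic_eq_zero_iff_dvd (monic_vS Sᶜ)).mpr dvd2, zero_add] at e2
        exact Prod.ext e1 e2
      have h1 := hrec p hp
      have h2 := hrec p' hp'
      rw [← h1, ← h2]
      have e1 : p.1 /ₘ vS S = p'.1 /ₘ vS S := congrArg Prod.fst heq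
      have e2 : p.2 /ₘ vS Sᶜ = p'.2 /ₘ vS Sᶜ := congrArg Prod.snd heq
      rw [e1, e2]
  calc Fib.card ≤ _ := hinj
    _ = q ^ (d₁ - S.card + 1) * q ^ (d₂ - Sᶜ.card + 1) := by
        rw [Finset.card_product, card_polyFinset, card_polyFinset]
    _ = q ^ (d₁ + d₂ + 2 - q) := by
        rw [← pow_add]
        congr 1
        omega

open Classical in
lemma BB_card_le (d₁ d₂ : ℕ) :
    (BB F d₁ d₂).card ≤ 2 ^ Fintype.card F * Fintype.card F ^ (d₁ + d₂ + 2 - Fintype.card F) := by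
  have hcover : BB F d₁ d₂ ⊆ (Finset.univ : Finset (Finset F)).biUnion
      (fun S => (BB F d₁ d₂).filter
        (fun p => Finset.univ.filter (fun x => p.1.eval x = 0) = S)) := by
    intro p hp
    exact Finset.mem_biUnion.mpr ⟨_, Finset.mem_univ _, Finset.mem_filter.mpr ⟨hp, rfl⟩⟩
  calc (BB F d₁ d₂).card ≤ _ := Finset.card_le_card hcover
    _ ≤ ∑ S : Finset F, ((BB F d₁ d₂).filter
        (fun p => Finset.univ.filter (fun x => p.1.eval x = 0) = S)).card :=
      Finset.card_biUnion_le
    _ ≤ ∑ _S : Finset F, Fintype.card F ^ (d₁ + d₂ + 2 - Fintype.card F) :=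
      Finset.sum_le_sum (fun S _ => fiber_card_le d₁ d₂ S)
    _ = 2 ^ Fintype.card F * Fintype.card F ^ (d₁ + d₂ + 2 - Fintype.card F) := by
      rw [Finset.sum_const, Finset.card_univ, Fintype.card_finset, smul_eq_mul]

open Classical in
lemma BB_nonempty_bound {d₁ d₂ : ℕ} (h : (BB F d₁ d₂).Nonempty) :
    Fintype.card F ≤ d₁ + d₂ := by
  obtain ⟨p, hp⟩ := h
  obtain ⟨_, _, hc1, hc2⟩ := fiber_facts hp
    (rfl : Finset.univ.filter (fun x => p.1.eval x = 0) = _)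
  have := Finset.card_compl (Finset.univ.filter (fun x => p.1.eval x = 0))
  omega

end Aux




/-- **Lower bound for the density of Schinzel pairs mod `ℓ`:**
`δ₂(ℓ,(d₁,d₂)) ≥ (1 − 1/ℓ^{1+d₁})(1 − 1/ℓ^{1+d₂}) − 2^ℓ/ℓ^ℓ`. -/
theorem schinzel_pair_density_lower_bound
    (ℓ : ℕ) (hℓ : ℓ.Prime) (d₁ d₂ : ℕ) (hd₁ : 1 ≤ d₁) (hd₂ : 1 ≤ d₂) :
    (1 - 1 / (ℓ : ℝ) ^ (1 + d₁)) * (1 - 1 / (ℓ : ℝ) ^ (1 + d₂))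
        - 2 ^ ℓ / (ℓ : ℝ) ^ ℓ
      ≤ (Nat.card {P : Polynomial (ZMod ℓ) × Polynomial (ZMod ℓ) //
          P.1.natDegree ≤ d₁ ∧ P.2.natDegree ≤ d₂ ∧
          ∃ x : ZMod ℓ, (P.1 * P.2).eval x ≠ 0} : ℝ) /
        (ℓ : ℝ) ^ (2 + d₁ + d₂) := by
  haveI : Fact ℓ.Prime := ⟨hℓ⟩
  set F := ZMod ℓ with hF
  have hcardF : Fintype.card F = ℓ := ZMod.card ℓ
  have hℓ2 : 2 ≤ ℓ := hℓ.two_le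
  have hℓR : (0:ℝ) < (ℓ:ℝ) := by positivity
  -- identify the Nat.card with the Finset card
  have hG : Nat.card {P : F[X] × F[X] //
      P.1.natDegree ≤ d₁ ∧ P.2.natDegree ≤ d₂ ∧ ∃ x : F, (P.1 * P.2).eval x ≠ 0}
      = (GG F d₁ d₂).card := by
    have h1 : Nat.card {P : F[X] × F[X] //
        P.1.natDegree ≤ d₁ ∧ P.2.natDegree ≤ d₂ ∧ ∃ x : F, (P.1 * P.2).eval x ≠ 0}
        = ({p : F[X] × F[X] | p.1.natDegree ≤ d₁ ∧ p.2.natDegree ≤ d₂ ∧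
            ∃ x : F, (p.1 * p.2).eval x ≠ 0}).ncard := Nat.card_coe_set_eq _
    rw [h1]
    have h2 : {p : F[X] × F[X] | p.1.natDegree ≤ d₁ ∧ p.2.natDegree ≤ d₂ ∧
        ∃ x : F, (p.1 * p.2).eval x ≠ 0} = ↑(GG F d₁ d₂) := by
      ext p
      simp only [Set.mem_setOf_eq, Finset.coe_filter, GG, DD, Finset.mem_coe,
        Finset.mem_filter, Finset.mem_product, mem_polyFinset]
      tauto
    rw [h2, Set.ncard_coe_finset]
  rw [hG]
  -- key counting inequalities
  have key : (ℓ ^ (d₁+1) - 1) * (ℓ ^ (d₂+1) - 1)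
      ≤ (GG F d₁ d₂).card + (BB F d₁ d₂).card := by
    have := NZ_card_le (F := F) d₁ d₂
    rwa [hcardF] at this
  have hone1 : 1 ≤ ℓ ^ (d₁+1) := Nat.one_le_pow _ _ hℓ.pos
  have hone2 : 1 ≤ ℓ ^ (d₂+1) := Nat.one_le_pow _ _ hℓ.pos
  have keyR : ((ℓ:ℝ) ^ (d₁+1) - 1) * ((ℓ:ℝ) ^ (d₂+1) - 1)
      ≤ ((GG F d₁ d₂).card : ℝ) + ((BB F d₁ d₂).card : ℝ) := by
    have := Nat.cast_le (α := ℝ).mpr key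
    push_cast [Nat.cast_sub hone1, Nat.cast_sub hone2] at this
    convert this using 2 <;> push_cast <;> ring
  have hB : ((BB F d₁ d₂).card : ℝ) ≤ 2^ℓ * (ℓ:ℝ)^(2+d₁+d₂) / (ℓ:ℝ)^ℓ := by
    rcases le_or_gt ℓ (d₁+d₂+2) with hle | hlt
    · have hnat : (BB F d₁ d₂).card ≤ 2 ^ ℓ * ℓ ^ (d₁ + d₂ + 2 - ℓ) := by
        have := BB_card_le (F := F) d₁ d₂
        rwa [hcardF] at this
      have hexp : (ℓ:ℝ)^(d₁+d₂+2-ℓ) * (ℓ:ℝ)^ℓ = (ℓ:ℝ)^(2+d₁+d₂) := by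
        rw [← pow_add]; congr 1; omega
      have : ((BB F d₁ d₂).card : ℝ) ≤ 2^ℓ * (ℓ:ℝ)^(d₁+d₂+2-ℓ) := by
        exact_mod_cast Nat.cast_le.mpr hnat
      rw [le_div_iff₀ (by positivity)]
      calc ((BB F d₁ d₂).card : ℝ) * (ℓ:ℝ)^ℓ ≤ 2^ℓ * (ℓ:ℝ)^(d₁+d₂+2-ℓ) * (ℓ:ℝ)^ℓ := by
            apply mul_le_mul_of_nonneg_right this (by positivity)
        _ = 2^ℓ * (ℓ:ℝ)^(2+d₁+d₂) := by rw [mul_assoc, hexp]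
    · have hempty : BB F d₁ d₂ = ∅ := by
        by_contra h
        have hne := Finset.nonempty_iff_ne_empty.mpr h
        have := BB_nonempty_bound (F := F) hne
        rw [hcardF] at this
        omega
      rw [hempty]
      simp only [Finset.card_empty, Nat.cast_zero]
      positivity
  -- final real arithmetic
  rw [le_div_iff₀ (by positivity : (0:ℝ) < (ℓ:ℝ)^(2+d₁+d₂))]
  rw [show 1 + d₁ = d₁ + 1 by ring, show 1 + d₂ = d₂ + 1 by ring]
  have expand : (ℓ:ℝ)^(2+d₁+d₂) = (ℓ:ℝ)^(d₁+1) * (ℓ:ℝ)^(d₂+1) := by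
    rw [← pow_add]; congr 1; omega
  have hn1 : (0:ℝ) < (ℓ:ℝ)^(d₁+1) := by positivity
  have hn2 : (0:ℝ) < (ℓ:ℝ)^(d₂+1) := by positivity
  have hql : (0:ℝ) < (ℓ:ℝ)^ℓ := by positivity
  have e : ((1 - 1/(ℓ:ℝ)^(d₁+1)) * (1 - 1/(ℓ:ℝ)^(d₂+1)) - 2^ℓ/(ℓ:ℝ)^ℓ) * (ℓ:ℝ)^(2+d₁+d₂)
      = ((ℓ:ℝ)^(d₁+1) - 1) * ((ℓ:ℝ)^(d₂+1) - 1) - 2^ℓ*(ℓ:ℝ)^(2+d₁+d₂)/(ℓ:ℝ)^ℓ := by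
    rw [expand]
    field_simp
  rw [e]
  linarith [keyR, hB]
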